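/- Let m be a positive integer and λ ∈ ℝ, and define R_λ : ℂ² × ℂ² → ℂ by R_λ(z,w) = (z₁·conj(w₁) + z₂·conj(w₂))^{2m} − λ·(z₁·z₂·conj(w₁)·conj(w₂))^m. If R_λ ∈ 𝒫_m(ℂ²), then λ ≤ binom(2m, m) + 2, where binom(2m, m) is the central binomial coefficient. Moreover R_λ ∈ 𝒫_m(ℂ²) does hold for λ = binom(2m, m) + 2, while R_λ ∉ 𝒫_{m+1}(ℂ²) for that value of λ; consequently 𝒫_m(ℂ²) ≠ 𝒫_{m+1}(ℂ²), and the family S_{λ,m} = {R_λ : λ ∈ ℝ} has stability index m+1. -/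

import Mathlib

open scoped ComplexOrder

/-- `R ∈ 𝒫_N(ℂ²)`: for all points `z_1, …, z_N ∈ ℂ²` and scalars `a_1, …, a_N ∈ ℂ`,
the sum `Σ_{i,j} R(z_i, z_j) a_i conj(a_j)` is a nonnegative real number. -/
def InP {M : Type*} (N : ℕ) (R : M × M → ℂ) : Prop :=
  ∀ (z : Fin N → M) (a : Fin N → ℂ),
    0 ≤ ∑ i, ∑ j, R (z i, z j) * a i * (starRingEnd ℂ) (a j)

/-- The perturbed Fubini–Study family:
`R_λ(z,w) = ⟨z,w⟩^{2m} − λ (z₁ z₂ conj(w₁) conj(w₂))^m` on `ℂ² × ℂ²`. -/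
noncomputable def Rlam (m : ℕ) (lam : ℝ) : (ℂ × ℂ) × (ℂ × ℂ) → ℂ :=
  fun p =>
    (p.1.1 * (starRingEnd ℂ) p.2.1 + p.1.2 * (starRingEnd ℂ) p.2.2) ^ (2 * m)
      - (lam : ℂ) * (p.1.1 * p.1.2 * (starRingEnd ℂ) p.2.1 * (starRingEnd ℂ) p.2.2) ^ m


open Finset Complex

noncomputable def vmom (m : ℕ) {N : ℕ} (z : Fin N → ℂ × ℂ) (a : Fin N → ℂ) (k : ℕ) : ℂ :=
  ∑ i, a i * (z i).1 ^ k * (z i).2 ^ (2 * m - k)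

lemma diag (m : ℕ) (lam : ℝ) {N : ℕ} (z : Fin N → ℂ × ℂ) (a : Fin N → ℂ) :
    ∑ i, ∑ j, Rlam m lam (z i, z j) * a i * (starRingEnd ℂ) (a j)
      = (((∑ k ∈ range (2 * m + 1),
            (Nat.choose (2 * m) k : ℝ) * normSq (vmom m z a k))
          - lam * normSq (vmom m z a m) : ℝ) : ℂ) := by
  set f : ℕ → Fin N → ℂ := fun k i => a i * (z i).1 ^ k * (z i).2 ^ (2 * m - k) with hf
  have hterm : ∀ i j : Fin N,
      Rlam m lam (z i, z j) * a i * (starRingEnd ℂ) (a j)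
        = (∑ k ∈ range (2 * m + 1), ((Nat.choose (2 * m) k : ℂ) *
             (f k i * (starRingEnd ℂ) (f k j))))
          - (lam : ℂ) * (f m i * (starRingEnd ℂ) (f m j)) := by
    intro i j
    have e1 : 2 * m - m = m := by omega
    simp only [Rlam, add_pow, sub_mul, sum_mul, hf, map_mul, map_pow, e1, mul_pow]
    congr 1
    · refine Finset.sum_congr rfl fun k hk => by ring
    · ring
  calc ∑ i, ∑ j, Rlam m lam (z i, z j) * a i * (starRingEnd ℂ) (a j)
      = ∑ i, ∑ j, ((∑ k ∈ range (2 * m + 1), ((Nat.choose (2 * m) k : ℂ) *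
             (f k i * (starRingEnd ℂ) (f k j))))
          - (lam : ℂ) * (f m i * (starRingEnd ℂ) (f m j))) := by
        exact Finset.sum_congr rfl fun i _ => Finset.sum_congr rfl fun j _ => hterm i j
    _ = (∑ i, ∑ j, (∑ k ∈ range (2 * m + 1), ((Nat.choose (2 * m) k : ℂ) *
             (f k i * (starRingEnd ℂ) (f k j)))))
          - ∑ i, ∑ j, (lam : ℂ) * (f m i * (starRingEnd ℂ) (f m j)) := by
        simp [Finset.sum_sub_distrib]
    _ = (∑ k ∈ range (2 * m + 1), ((Nat.choose (2 * m) k : ℂ) *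
            (vmom m z a k * (starRingEnd ℂ) (vmom m z a k))))
          - (lam : ℂ) * (vmom m z a m * (starRingEnd ℂ) (vmom m z a m)) := by
        have hv : ∀ k, vmom m z a k = ∑ i, f k i := fun k => rfl
        have hps : ∀ (g : Fin N → ℂ), (∑ i, g i) * (starRingEnd ℂ) (∑ j, g j)
            = ∑ i, ∑ j, g i * (starRingEnd ℂ) (g j) := by
          intro g; rw [map_sum, Finset.sum_mul_sum]
        congr 1
        · symm
          calc ∑ k ∈ range (2 * m + 1), ((Nat.choose (2 * m) k : ℂ) *
                  (vmom m z a k * (starRingEnd ℂ) (vmom m z a k)))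
              = ∑ k ∈ range (2 * m + 1), ∑ i, ∑ j, ((Nat.choose (2 * m) k : ℂ) *
                  (f k i * (starRingEnd ℂ) (f k j))) := by
                refine Finset.sum_congr rfl fun k _ => ?_
                rw [hv k, hps (f k)]
                simp [Finset.mul_sum]
            _ = ∑ i, ∑ k ∈ range (2 * m + 1), ∑ j, ((Nat.choose (2 * m) k : ℂ) *
                  (f k i * (starRingEnd ℂ) (f k j))) := Finset.sum_comm
            _ = ∑ i, ∑ j, ∑ k ∈ range (2 * m + 1), ((Nat.choose (2 * m) k : ℂ) *
                  (f k i * (starRingEnd ℂ) (f k j))) :=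
                Finset.sum_congr rfl fun i _ => Finset.sum_comm
        · rw [hv m, hps (f m)]
          simp [Finset.mul_sum]
    _ = _ := by
        simp only [Complex.mul_conj]
        push_cast
        ring

lemma root_sum (n : ℕ) (hn : 0 < n) (k : ℕ) :
    ∑ i : Fin n, Complex.exp (2 * Real.pi * Complex.I / n) ^ ((i : ℕ) * k)
      = if n ∣ k then (n : ℂ) else 0 := by
  set ζ := Complex.exp (2 * Real.pi * Complex.I / n) with hζ
  have hprim : IsPrimitiveRoot ζ n := Complex.isPrimitiveRoot_exp n hn.ne'
  have hre : ∀ i : ℕ, ζ ^ (i * k) = (ζ ^ k) ^ i := fun i => by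
    rw [← pow_mul, mul_comm]
  rw [Fin.sum_univ_eq_sum_range (fun i => ζ ^ (i * k))]
  simp only [hre]
  by_cases hdvd : n ∣ k
  · rw [if_pos hdvd]
    have h1 : ζ ^ k = 1 := (hprim.pow_eq_one_iff_dvd k).mpr hdvd
    simp [h1]
  · rw [if_neg hdvd]
    have h1 : ζ ^ k ≠ 1 := fun h => hdvd ((hprim.pow_eq_one_iff_dvd k).mp h)
    rw [geom_sum_eq h1]
    have h2 : (ζ ^ k) ^ n = 1 := by
      rw [← pow_mul, mul_comm, pow_mul, hprim.pow_eq_one, one_pow]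
    rw [h2]
    simp

lemma vconfig (m n e : ℕ) (hn : 0 < n) (k : ℕ) :
    vmom m (fun i : Fin n => (Complex.exp (2 * Real.pi * Complex.I / n) ^ (i : ℕ), 1))
      (fun i : Fin n => Complex.exp (2 * Real.pi * Complex.I / n) ^ ((i : ℕ) * e)) k
      = if n ∣ (e + k) then (n : ℂ) else 0 := by
  rw [← root_sum n hn (e + k)]
  unfold vmom
  refine Finset.sum_congr rfl fun i _ => ?_
  simp only [one_pow, mul_one, ← pow_mul, ← pow_add]
  congr 1
  ring

lemma partA (m : ℕ) (hm : 0 < m) (lam : ℝ) (h : InP m (Rlam m lam)) :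
    lam ≤ (Nat.choose (2 * m) m : ℝ) + 2 := by
  set ζ := Complex.exp (2 * Real.pi * Complex.I / m) with hζ
  set z : Fin m → ℂ × ℂ := fun i => (ζ ^ (i : ℕ), 1) with hz
  set a : Fin m → ℂ := fun i => ζ ^ ((i : ℕ) * 0) with ha
  have hv : ∀ k, vmom m z a k = if m ∣ (0 + k) then (m : ℂ) else 0 :=
    fun k => vconfig m m 0 hm k
  have h0 := h z a
  rw [diag m lam z a] at h0
  rw [Complex.zero_le_real] at h0
  have hns : ∀ k, Complex.normSq (vmom m z a k) = if m ∣ k then (m : ℝ) ^ 2 else 0 := by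
    intro k
    rw [hv k]
    rcases em (m ∣ (0 + k)) with hd | hd
    · rw [if_pos hd, if_pos (by simpa using hd)]
      simp [Complex.normSq, sq]
    · rw [if_neg hd, if_neg (by simpa using hd)]
      simp
  simp only [hns] at h0
  have hsum : ∑ k ∈ Finset.range (2 * m + 1),
      (Nat.choose (2 * m) k : ℝ) * (if m ∣ k then (m : ℝ) ^ 2 else 0)
      = ((Nat.choose (2 * m) m : ℝ) + 2) * (m : ℝ) ^ 2 := by
    have hsub : ({0, m, 2 * m} : Finset ℕ) ⊆ Finset.range (2 * m + 1) := by
      intro x hx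
      simp only [Finset.mem_insert, Finset.mem_singleton] at hx
      rcases hx with rfl | rfl | rfl <;> simp [Finset.mem_range] <;> omega
    rw [← Finset.sum_subset hsub (by
      intro x hx hnx
      have hx' := Finset.mem_range.mp hx
      simp only [Finset.mem_insert, Finset.mem_singleton, not_or] at hnx
      rw [if_neg, mul_zero]
      rintro ⟨c, rfl⟩
      have hc : c ≤ 2 := by
        by_contra h3
        push_neg at h3
        have := Nat.mul_le_mul (le_refl m) h3
        omega
      interval_cases c <;> omega)]
    have h1 : (0 : ℕ) ∉ ({m, 2 * m} : Finset ℕ) := by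
      simp only [Finset.mem_insert, Finset.mem_singleton]
      omega
    have h2 : m ∉ ({2 * m} : Finset ℕ) := by
      simp only [Finset.mem_singleton]; omega
    rw [Finset.sum_insert h1, Finset.sum_insert h2, Finset.sum_singleton,
        if_pos (dvd_zero m), if_pos (dvd_refl m), if_pos (dvd_mul_left m 2)]
    simp only [Nat.choose_self, Nat.choose_zero_right, Nat.cast_one]
    ring
  rw [hsum, if_pos (dvd_refl m)] at h0
  have hm2 : (0 : ℝ) < (m : ℝ) ^ 2 := by positivity
  nlinarith

lemma partCgen (m : ℕ) (hm : 0 < m) (lam : ℝ) (h : InP (m + 1) (Rlam m lam)) :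
    lam ≤ (Nat.choose (2 * m) m : ℝ) := by
  have hn : 0 < m + 1 := Nat.succ_pos m
  set ζ := Complex.exp (2 * Real.pi * Complex.I / ((m + 1 : ℕ) : ℂ)) with hζ
  set z : Fin (m + 1) → ℂ × ℂ := fun i => (ζ ^ (i : ℕ), 1) with hz
  set a : Fin (m + 1) → ℂ := fun i => ζ ^ ((i : ℕ) * 1) with ha
  have hv : ∀ k, vmom m z a k = if (m + 1) ∣ (1 + k) then ((m + 1 : ℕ) : ℂ) else 0 := by
    intro k
    exact vconfig m (m + 1) 1 hn k
  have h0 := h z a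
  rw [diag m lam z a] at h0
  rw [Complex.zero_le_real] at h0
  have hns : ∀ k, Complex.normSq (vmom m z a k)
      = if (m + 1) ∣ (1 + k) then ((m : ℝ) + 1) ^ 2 else 0 := by
    intro k
    rw [hv k]
    rcases em ((m + 1) ∣ (1 + k)) with hd | hd
    · rw [if_pos hd, if_pos hd]
      push_cast
      simp [Complex.normSq, sq]
    · rw [if_neg hd, if_neg hd]
      simp
  simp only [hns] at h0
  have hsum : ∑ k ∈ Finset.range (2 * m + 1),
      (Nat.choose (2 * m) k : ℝ) * (if (m + 1) ∣ (1 + k) then ((m : ℝ) + 1) ^ 2 else 0)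
      = (Nat.choose (2 * m) m : ℝ) * ((m : ℝ) + 1) ^ 2 := by
    rw [Finset.sum_eq_single_of_mem m (by simp [Finset.mem_range]; omega)]
    · rw [if_pos ⟨1, by omega⟩]
    · intro b hb hbm
      have hb' := Finset.mem_range.mp hb
      rw [if_neg, mul_zero]
      rintro ⟨c, hc⟩
      have hc2 : c ≤ 2 := by
        by_contra h3
        push_neg at h3
        have := Nat.mul_le_mul (le_refl (m + 1)) h3
        omega
      interval_cases c <;> omega
  rw [hsum, if_pos ⟨1, by omega⟩] at h0
  have hm2 : (0 : ℝ) < ((m : ℝ) + 1) ^ 2 := by positivity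
  nlinarith

lemma allN (m : ℕ) (lam : ℝ) (hlam : lam ≤ (Nat.choose (2 * m) m : ℝ)) (N : ℕ) :
    InP N (Rlam m lam) := by
  intro z a
  rw [diag m lam z a, Complex.zero_le_real]
  have hmem : m ∈ Finset.range (2 * m + 1) := by
    simp [Finset.mem_range]; omega
  have hsingle : (Nat.choose (2 * m) m : ℝ) * Complex.normSq (vmom m z a m)
      ≤ ∑ k ∈ Finset.range (2 * m + 1),
          (Nat.choose (2 * m) k : ℝ) * Complex.normSq (vmom m z a k) :=
    Finset.single_le_sum (f := fun k => (Nat.choose (2 * m) k : ℝ) * Complex.normSq (vmom m z a k)) (fun k _ => mul_nonneg (by positivity) (Complex.normSq_nonneg _)) hmem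
  have hns : 0 ≤ Complex.normSq (vmom m z a m) := Complex.normSq_nonneg _
  nlinarith

lemma InP_mono {M : Type*} (p0 : M) {k N : ℕ} (hkN : k ≤ N) (R : M × M → ℂ)
    (h : InP N R) : InP k R := by
  intro z a
  set z' : Fin N → M := fun i => if h : (i : ℕ) < k then z ⟨i, h⟩ else p0 with hz'
  set a' : Fin N → ℂ := fun i => if h : (i : ℕ) < k then a ⟨i, h⟩ else 0 with ha'
  have h0 := h z' a'
  have hmem : ∀ i : Fin N, i ∈ (Finset.univ : Finset (Fin k)).map (Fin.castLEEmb hkN)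
      ↔ (i : ℕ) < k := by
    intro i
    simp only [Finset.mem_map, Finset.mem_univ, true_and]
    constructor
    · rintro ⟨b, rfl⟩; exact b.isLt
    · intro hi; exact ⟨⟨i, hi⟩, rfl⟩
  have hsum : ∀ (T : Fin N → ℂ), (∀ i : Fin N, ¬ (i : ℕ) < k → T i = 0) →
      ∑ i, T i = ∑ i : Fin k, T (Fin.castLE hkN i) := by
    intro T hT
    rw [← Finset.sum_subset (Finset.subset_univ
      ((Finset.univ : Finset (Fin k)).map (Fin.castLEEmb hkN)))
      (fun x _ hx => hT x (fun hlt => hx ((hmem x).mpr hlt)))]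
    rw [Finset.sum_map]
    rfl
  have hTrow : ∀ i : Fin N, ¬ (i : ℕ) < k →
      ∑ j, R (z' i, z' j) * a' i * (starRingEnd ℂ) (a' j) = 0 := by
    intro i hi
    have : a' i = 0 := by simp [ha', hi]
    simp [this]
  rw [hsum _ hTrow] at h0
  have hrows : ∀ i : Fin k,
      ∑ j, R (z' (Fin.castLE hkN i), z' j) * a' (Fin.castLE hkN i) * (starRingEnd ℂ) (a' j)
        = ∑ j, R (z i, z j) * a i * (starRingEnd ℂ) (a j) := by
    intro i
    rw [hsum (fun j => R (z' (Fin.castLE hkN i), z' j) * a' (Fin.castLE hkN i)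
        * (starRingEnd ℂ) (a' j)) (fun j hj => by
          have : a' j = 0 := by simp [ha', hj]
          simp [this])]
    refine Finset.sum_congr rfl fun j _ => ?_
    have e1 : z' (Fin.castLE hkN i) = z i := by
      simp [hz', Fin.coe_castLE, i.isLt]
    have e2 : a' (Fin.castLE hkN i) = a i := by
      simp [ha', Fin.coe_castLE, i.isLt]
    have e3 : z' (Fin.castLE hkN j) = z j := by
      simp [hz', Fin.coe_castLE, j.isLt]
    have e4 : a' (Fin.castLE hkN j) = a j := by
      simp [ha', Fin.coe_castLE, j.isLt]
    rw [e1, e2, e3, e4]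
  rw [Finset.sum_congr rfl (fun i _ => hrows i)] at h0
  exact h0

lemma choose_ge (m : ℕ) (hm : 0 < m) : ∀ s, 1 ≤ s → s ≤ 2 * m - 1 →
    2 * m ≤ Nat.choose (2 * m) s := by
  have half : ∀ s, 1 ≤ s → s ≤ m → 2 * m ≤ Nat.choose (2 * m) s := by
    intro s h1 h2
    induction s with
    | zero => omega
    | succ t ih =>
      rcases Nat.eq_or_lt_of_le h1 with h | h
      · have : t = 0 := by omega
        subst this
        simp [Nat.choose_one_right]
      · have ht : 1 ≤ t := by omega
        calc 2 * m ≤ Nat.choose (2 * m) t := ih ht (by omega)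
          _ ≤ Nat.choose (2 * m) (t + 1) :=
            Nat.choose_le_succ_of_lt_half_left (by omega)
  intro s h1 h2
  rcases Nat.le_total s m with h | h
  · exact half s h1 h
  · have hs2 : s ≤ 2 * m := by omega
    have := Nat.choose_symm hs2
    rw [← this]
    exact half (2 * m - s) (by omega) (by omega)

lemma sum_diag_rev {α : Type*} [AddCommMonoid α] (n : ℕ) (F : Fin n × Fin n → α) :
    ∑ q ∈ Finset.univ.filter (fun q : Fin n × Fin n => q.2 = q.1.rev), F q
      = ∑ k : Fin n, F (k, k.rev) := by
  rw [Finset.sum_filter, Fintype.sum_prod_type]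
  refine Finset.sum_congr rfl fun k _ => ?_
  simp

lemma sum_rev {α : Type*} [AddCommMonoid α] (n : ℕ) (F : Fin n → α) :
    ∑ k : Fin n, F k.rev = ∑ k : Fin n, F k :=
  Fintype.sum_bijective Fin.rev Fin.rev_bijective (fun k => F k.rev) F (fun _ => rfl) |>.symm ▸ rfl

lemma exists_annihilator (m : ℕ) (z : Fin m → ℂ × ℂ) :
    ∃ p : Fin (m + 1) → ℂ, p ≠ 0 ∧
      ∀ i : Fin m, ∑ l : Fin (m + 1), (z i).1 ^ (l : ℕ) * (z i).2 ^ (m - (l : ℕ)) * p l = 0 := by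
  set Mat : Matrix (Fin m) (Fin (m + 1)) ℂ :=
    fun i l => (z i).1 ^ (l : ℕ) * (z i).2 ^ (m - (l : ℕ)) with hMat
  have hni : ¬ Function.Injective Mat.mulVecLin := by
    intro hinj
    have h1 := LinearMap.finrank_le_finrank_of_injective hinj
    rw [Module.finrank_fin_fun, Module.finrank_fin_fun] at h1
    omega
  rw [← LinearMap.ker_eq_bot] at hni
  obtain ⟨p, hpker, hp0⟩ := (Submodule.ne_bot_iff _).mp hni
  refine ⟨p, hp0, fun i => ?_⟩
  have h2 : (Matrix.mulVec Mat p) i = 0 := congrFun (LinearMap.mem_ker.mp hpker) i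
  simpa [Matrix.mulVecLin_apply, Matrix.mulVec, dotProduct, hMat] using h2


lemma keyineq (m : ℕ) (hm : 0 < m) (z : Fin m → ℂ × ℂ) (a : Fin m → ℂ) :
    2 * Complex.normSq (vmom m z a m)
      ≤ ∑ k ∈ (Finset.range (2 * m + 1)).erase m,
          (Nat.choose (2 * m) k : ℝ) * Complex.normSq (vmom m z a k) := by
  obtain ⟨p, hp0, hpz⟩ := exists_annihilator m z
  set v : ℕ → ℂ := vmom m z a with hv
  have hrel : ∀ k : ℕ, k ≤ m → ∑ l : Fin (m + 1), p l * v (k + (l : ℕ)) = 0 := by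
    intro k hk
    calc ∑ l : Fin (m + 1), p l * v (k + (l : ℕ))
        = ∑ l : Fin (m + 1), ∑ i : Fin m, (a i * (z i).1 ^ k * (z i).2 ^ (m - k)) *
            ((z i).1 ^ (l : ℕ) * (z i).2 ^ (m - (l : ℕ)) * p l) := by
          refine Finset.sum_congr rfl fun l _ => ?_
          rw [hv]
          unfold vmom
          rw [Finset.mul_sum]
          refine Finset.sum_congr rfl fun i _ => ?_
          have e : 2 * m - (k + (l : ℕ)) = (m - k) + (m - (l : ℕ)) := by
            have := l.isLt; omega
          rw [e, pow_add, pow_add]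
          ring
      _ = ∑ i : Fin m, (a i * (z i).1 ^ k * (z i).2 ^ (m - k)) *
            (∑ l : Fin (m + 1), (z i).1 ^ (l : ℕ) * (z i).2 ^ (m - (l : ℕ)) * p l) := by
          rw [Finset.sum_comm]
          exact Finset.sum_congr rfl fun i _ => (Finset.mul_sum _ _ _).symm
      _ = 0 := by simp [hpz]
  set t : Fin (m + 1) × Fin (m + 1) → ℂ :=
    fun q => (starRingEnd ℂ) (p q.1.rev) * (p q.2 * v ((q.1 : ℕ) + (q.2 : ℕ))) with ht
  set D : Finset (Fin (m + 1) × Fin (m + 1)) :=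
    Finset.univ.filter (fun q => ¬ (q.2 = q.1.rev)) with hD
  set Q : Fin (m + 1) → ℝ := fun l => Complex.normSq (p l) with hQ
  set np2 : ℝ := ∑ l, Q l with hnp2
  have hQnn : ∀ l, 0 ≤ Q l := fun l => Complex.normSq_nonneg _
  have hnp2pos : 0 < np2 := by
    obtain ⟨l0, hl0⟩ := Function.ne_iff.mp hp0
    have h1 : 0 < Q l0 := Complex.normSq_pos.mpr hl0
    exact lt_of_lt_of_le h1
      (Finset.single_le_sum (fun l _ => hQnn l) (Finset.mem_univ l0))
  have hdouble : ∑ q : Fin (m + 1) × Fin (m + 1), t q = 0 := by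
    rw [Fintype.sum_prod_type]
    refine Finset.sum_eq_zero fun k _ => ?_
    have h1 : ∑ l : Fin (m + 1), t (k, l)
        = (starRingEnd ℂ) (p k.rev) * ∑ l : Fin (m + 1), p l * v ((k : ℕ) + (l : ℕ)) := by
      rw [Finset.mul_sum]
    rw [h1, hrel (k : ℕ) (by have := k.isLt; omega), mul_zero]
  have hkrev : ∀ k : Fin (m + 1), (k : ℕ) + (k.rev : ℕ) = m := by
    intro k
    rw [Fin.val_rev]
    have := k.isLt
    omega
  have hdiag : ∑ q ∈ Finset.univ.filter (fun q : Fin (m + 1) × Fin (m + 1) => q.2 = q.1.rev), t q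
      = (np2 : ℂ) * v m := by
    rw [sum_diag_rev]
    have h1 : ∀ k : Fin (m + 1), t (k, k.rev) = ((Q k.rev : ℝ) : ℂ) * v m := by
      intro k
      show (starRingEnd ℂ) (p k.rev) * (p k.rev * v ((k : ℕ) + (k.rev : ℕ))) = _
      rw [hkrev k]
      have : (starRingEnd ℂ) (p k.rev) * (p k.rev * v m)
          = (p k.rev * (starRingEnd ℂ) (p k.rev)) * v m := by ring
      rw [this, Complex.mul_conj]
    simp only [h1]
    rw [← Finset.sum_mul, ← Complex.ofReal_sum, sum_rev (m + 1) Q]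
  have hA : (np2 : ℂ) * v m = - ∑ q ∈ D, t q := by
    have hsplit := Finset.sum_filter_add_sum_filter_not Finset.univ
      (fun q : Fin (m + 1) × Fin (m + 1) => q.2 = q.1.rev) t
    rw [hdiag] at hsplit
    rw [hD]
    linear_combination hsplit + hdouble
  set nn : ℕ → ℕ := fun s => min s (2 * m - s) + 1 with hnn
  set w : ℕ → ℝ := fun s => (nn s : ℝ) / (Nat.choose (2 * m) s : ℝ) with hw
  have hwpos : ∀ s, s ≤ 2 * m → 0 < w s := by
    intro s hs
    apply div_pos
    · exact_mod_cast Nat.succ_pos _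
    · exact_mod_cast Nat.choose_pos hs
  have hsD : ∀ q ∈ D, (q.1 : ℕ) + (q.2 : ℕ) ≤ 2 * m ∧ (q.1 : ℕ) + (q.2 : ℕ) ≠ m := by
    intro q hq
    constructor
    · have := q.1.isLt; have := q.2.isLt; omega
    · intro hsum
      rw [hD, Finset.mem_filter] at hq
      apply hq.2
      apply Fin.ext
      rw [Fin.val_rev]
      have := q.1.isLt
      omega
  set f : Fin (m + 1) × Fin (m + 1) → ℝ :=
    fun q => ‖p q.1.rev‖ * ‖p q.2‖ *
      Real.sqrt (w ((q.1 : ℕ) + (q.2 : ℕ))) with hf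
  set g : Fin (m + 1) × Fin (m + 1) → ℝ :=
    fun q => ‖v ((q.1 : ℕ) + (q.2 : ℕ))‖ /
      Real.sqrt (w ((q.1 : ℕ) + (q.2 : ℕ))) with hg
  have habs : ∀ q ∈ D, ‖t q‖ = f q * g q := by
    intro q hq
    obtain ⟨h2m, _⟩ := hsD q hq
    have hw' := hwpos _ h2m
    have hsqrt : Real.sqrt (w ((q.1 : ℕ) + (q.2 : ℕ))) ≠ 0 :=
      ne_of_gt (Real.sqrt_pos.mpr hw')
    show ‖t q‖ = _
    rw [ht]
    simp only [norm_mul, Complex.norm_conj]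
    rw [hf, hg]
    field_simp
  have hCS : (np2 * ‖v m‖) ^ 2 ≤ (∑ q ∈ D, f q ^ 2) * (∑ q ∈ D, g q ^ 2) := by
    have h1 : np2 * ‖v m‖ = ‖(np2 : ℂ) * v m‖ := by
      rw [norm_mul, Complex.norm_real, Real.norm_of_nonneg hnp2pos.le]
    have h2 : ‖(np2 : ℂ) * v m‖ ≤ ∑ q ∈ D, f q * g q := by
      rw [hA, norm_neg]
      refine le_trans (norm_sum_le _ _) ?_
      exact le_of_eq (Finset.sum_congr rfl habs)
    calc (np2 * ‖v m‖) ^ 2 ≤ (∑ q ∈ D, f q * g q) ^ 2 := by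
          rw [h1]
          exact pow_le_pow_left₀ (norm_nonneg _) h2 2
      _ ≤ (∑ q ∈ D, f q ^ 2) * (∑ q ∈ D, g q ^ 2) :=
          Finset.sum_mul_sq_le_sq_mul_sq D f g
  have hG : (∑ q ∈ D, g q ^ 2) ≤ ∑ k ∈ (Finset.range (2 * m + 1)).erase m,
      (Nat.choose (2 * m) k : ℝ) * Complex.normSq (v k) := by
    have hmaps : ∀ q ∈ D, (q.1 : ℕ) + (q.2 : ℕ) ∈ (Finset.range (2 * m + 1)).erase m := by
      intro q hq
      obtain ⟨h2m, hne⟩ := hsD q hq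
      rw [Finset.mem_erase]
      exact ⟨hne, Finset.mem_range.mpr (by omega)⟩
    rw [← Finset.sum_fiberwise_of_maps_to hmaps (fun q => g q ^ 2)]
    refine Finset.sum_le_sum fun y hy => ?_
    obtain ⟨hym, hyr⟩ := Finset.mem_erase.mp hy
    have hy2m : y ≤ 2 * m := by have := Finset.mem_range.mp hyr; omega
    have hwy := hwpos y hy2m
    have hgval : ∀ q ∈ D.filter (fun q => (q.1 : ℕ) + (q.2 : ℕ) = y),
        g q ^ 2 = Complex.normSq (v y) / w y := by
      intro q hq
      obtain ⟨hqD, hqy⟩ := Finset.mem_filter.mp hq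
      show (‖v ((q.1 : ℕ) + (q.2 : ℕ))‖ /
        Real.sqrt (w ((q.1 : ℕ) + (q.2 : ℕ)))) ^ 2 = _
      rw [hqy, div_pow, Real.sq_sqrt (le_of_lt hwy), Complex.sq_norm]
    rw [Finset.sum_congr rfl hgval, Finset.sum_const, nsmul_eq_mul]
    have hcard : ((D.filter (fun q => (q.1 : ℕ) + (q.2 : ℕ) = y)).card : ℝ) ≤ (nn y : ℝ) := by
      have h1 : (D.filter (fun q => (q.1 : ℕ) + (q.2 : ℕ) = y)).card
          ≤ (Finset.range (nn y)).card := by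
        apply Finset.card_le_card_of_injOn (fun q => (q.1 : ℕ) - (y - m))
        · intro q hq
          obtain ⟨hqD, hqy⟩ := Finset.mem_filter.mp hq
          have hqy' : (q.1 : ℕ) + (q.2 : ℕ) = y := hqy
          have h1 := q.1.isLt
          have h2 := q.2.isLt
          have hminy : nn y = min y (2 * m - y) + 1 := rfl
          simp only [Finset.mem_coe, Finset.mem_range]
          rw [hminy]
          rcases Nat.le_total y (2 * m - y) with hmin | hmin
          · rw [min_eq_left hmin]; omega
          · rw [min_eq_right hmin]; omega
        · intro q hq q' hq' heq
          obtain ⟨_, hqy⟩ := Finset.mem_filter.mp hq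
          obtain ⟨_, hqy''⟩ := Finset.mem_filter.mp hq'
          have hqy1 : (q.1 : ℕ) + (q.2 : ℕ) = y := hqy
          have hqy2 : (q'.1 : ℕ) + (q'.2 : ℕ) = y := hqy''
          have heq' : (q.1 : ℕ) - (y - m) = (q'.1 : ℕ) - (y - m) := heq
          have h1 := q.1.isLt
          have h2 := q.2.isLt
          have h1' := q'.1.isLt
          have h2' := q'.2.isLt
          have e1 : (q.1 : ℕ) = (q'.1 : ℕ) := by omega
          have e2 : (q.2 : ℕ) = (q'.2 : ℕ) := by omega
          exact Prod.ext (Fin.ext e1) (Fin.ext e2)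
      rw [Finset.card_range] at h1
      exact_mod_cast h1
    have hcnn : (0 : ℝ) ≤ Complex.normSq (v y) / w y :=
      div_nonneg (Complex.normSq_nonneg _) (le_of_lt hwy)
    calc ((D.filter (fun q => (q.1 : ℕ) + (q.2 : ℕ) = y)).card : ℝ) *
          (Complex.normSq (v y) / w y)
        ≤ (nn y : ℝ) * (Complex.normSq (v y) / w y) :=
          mul_le_mul_of_nonneg_right hcard hcnn
      _ = (Nat.choose (2 * m) y : ℝ) * Complex.normSq (v y) := by
          rw [hw]
          have hnn0 : (nn y : ℝ) ≠ 0 := by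
            have : 0 < nn y := Nat.succ_pos _
            exact_mod_cast Nat.pos_iff_ne_zero.mp this
          have hch0 : (Nat.choose (2 * m) y : ℝ) ≠ 0 := by
            have := Nat.choose_pos hy2m
            exact_mod_cast Nat.pos_iff_ne_zero.mp this
          field_simp
  have hF : (∑ q ∈ D, f q ^ 2) ≤ np2 ^ 2 / 2 := by
    set FF : Fin (m + 1) × Fin (m + 1) → ℝ :=
      fun q => Q q.1.rev * Q q.2 * w ((q.1 : ℕ) + (q.2 : ℕ)) with hFF
    set QQ : Fin (m + 1) × Fin (m + 1) → ℝ := fun q => Q q.1.rev * Q q.2 with hQQ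
    have hQQnn : ∀ q, 0 ≤ QQ q := fun q => mul_nonneg (hQnn _) (hQnn _)
    have hfsq : ∀ q ∈ D, f q ^ 2 = FF q := by
      intro q hq
      obtain ⟨h2m, _⟩ := hsD q hq
      show (‖p q.1.rev‖ * ‖p q.2‖ *
        Real.sqrt (w ((q.1 : ℕ) + (q.2 : ℕ)))) ^ 2 = _
      rw [mul_pow, mul_pow, Complex.sq_norm, Complex.sq_norm,
        Real.sq_sqrt (le_of_lt (hwpos _ h2m))]
    rw [Finset.sum_congr rfl hfsq]
    set q0 : Fin (m + 1) × Fin (m + 1) := (0, 0) with hq0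
    set q1 : Fin (m + 1) × Fin (m + 1) := (Fin.last m, Fin.last m) with hq1
    have hrev0 : (0 : Fin (m + 1)).rev = Fin.last m := by
      apply Fin.ext
      simp [Fin.val_rev]
    have hrevlast : (Fin.last m).rev = (0 : Fin (m + 1)) := by
      apply Fin.ext
      simp [Fin.val_rev]
    have hq0D : q0 ∈ D := by
      rw [hD, Finset.mem_filter]
      refine ⟨Finset.mem_univ _, ?_⟩
      show ¬ ((0 : Fin (m + 1)) = (0 : Fin (m + 1)).rev)
      rw [hrev0]
      intro h
      have := congrArg Fin.val h
      simp [Fin.val_last] at this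
      omega
    have hq1D : q1 ∈ D := by
      rw [hD, Finset.mem_filter]
      refine ⟨Finset.mem_univ _, ?_⟩
      show ¬ ((Fin.last m) = (Fin.last m).rev)
      rw [hrevlast]
      intro h
      have := congrArg Fin.val h
      simp [Fin.val_last] at this
      omega
    have hne01 : q1 ≠ q0 := by
      intro h
      have := congrArg (fun q : Fin (m + 1) × Fin (m + 1) => (q.1 : ℕ)) h
      simp [hq0, hq1, Fin.val_last] at this
      omega
    have hq1D' : q1 ∈ D.erase q0 := Finset.mem_erase.mpr ⟨hne01, hq1D⟩
    have hw0 : w 0 = 1 := by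
      rw [hw]
      show ((min 0 (2 * m - 0) + 1 : ℕ) : ℝ) / ((Nat.choose (2 * m) 0 : ℕ) : ℝ) = 1
      simp
    have hw2m : w (2 * m) = 1 := by
      rw [hw]
      show ((min (2 * m) (2 * m - 2 * m) + 1 : ℕ) : ℝ) / _ = 1
      simp [Nat.choose_self]
    have hFFq0 : FF q0 = Q (Fin.last m) * Q 0 := by
      rw [hFF]
      show Q (0 : Fin (m + 1)).rev * Q 0 * w (((0 : Fin (m + 1)) : ℕ) + ((0 : Fin (m + 1)) : ℕ)) = _
      rw [hrev0]
      norm_num [hw0]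
    have hFFq1 : FF q1 = Q 0 * Q (Fin.last m) := by
      rw [hFF]
      show Q (Fin.last m).rev * Q (Fin.last m) * w (((Fin.last m) : ℕ) + ((Fin.last m) : ℕ)) = _
      rw [hrevlast]
      have e : ((Fin.last m : Fin (m + 1)) : ℕ) + ((Fin.last m : Fin (m + 1)) : ℕ) = 2 * m := by
        rw [Fin.val_last]; omega
      rw [e, hw2m, mul_one]
    have hrest : ∀ q ∈ (D.erase q0).erase q1, FF q ≤ (1 / 2) * QQ q := by
      intro q hq
      obtain ⟨hnq1, hq'⟩ := Finset.mem_erase.mp hq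
      obtain ⟨hnq0, hqD⟩ := Finset.mem_erase.mp hq'
      obtain ⟨h2m, hnem⟩ := hsD q hqD
      set s : ℕ := (q.1 : ℕ) + (q.2 : ℕ) with hs
      have hs0 : s ≠ 0 := by
        intro h
        apply hnq0
        have e1 : (q.1 : ℕ) = 0 := by omega
        have e2 : (q.2 : ℕ) = 0 := by omega
        exact Prod.ext (Fin.ext e1) (Fin.ext e2)
      have hs2m : s ≠ 2 * m := by
        intro h
        apply hnq1
        have hv1 := q.1.isLt
        have hv2 := q.2.isLt
        have e1 : (q.1 : ℕ) = m := by omega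
        have e2 : (q.2 : ℕ) = m := by omega
        refine Prod.ext (Fin.ext ?_) (Fin.ext ?_) <;> simp [hq1, Fin.val_last, e1, e2]
      have hnns : nn s ≤ m := by
        have hminy : nn s = min s (2 * m - s) + 1 := rfl
        rw [hminy]
        rcases Nat.le_total s (2 * m - s) with hmin | hmin
        · rw [min_eq_left hmin]; omega
        · rw [min_eq_right hmin]; omega
      have hch : 2 * m ≤ Nat.choose (2 * m) s := choose_ge m hm s (by omega) (by omega)
      have hws : w s ≤ 1 / 2 := by
        have h1 : w s ≤ (m : ℝ) / ((2 * m : ℕ) : ℝ) := by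
          rw [hw]
          apply div_le_div₀ (by positivity) (by exact_mod_cast hnns)
            (by exact_mod_cast (by omega : 0 < 2 * m)) (by exact_mod_cast hch)
        have h2 : (m : ℝ) / ((2 * m : ℕ) : ℝ) = 1 / 2 := by
          have hmR : (m : ℝ) ≠ 0 := by
            exact_mod_cast Nat.pos_iff_ne_zero.mp hm
          push_cast
          field_simp
        rw [h2] at h1
        exact h1
      calc FF q = QQ q * w s := rfl
        _ ≤ QQ q * (1 / 2) := mul_le_mul_of_nonneg_left hws (hQQnn q)
        _ = (1 / 2) * QQ q := by ring
    have hsum_univ : ∑ q : Fin (m + 1) × Fin (m + 1), QQ q = np2 ^ 2 := by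
      rw [Fintype.sum_prod_type]
      have h1 : ∀ k : Fin (m + 1), ∑ l : Fin (m + 1), QQ (k, l) = Q k.rev * np2 := by
        intro k
        rw [hnp2, Finset.mul_sum]
      rw [Finset.sum_congr rfl fun k _ => h1 k, ← Finset.sum_mul, sum_rev (m + 1) Q, ← hnp2]
      ring
    have hsum_diag : ∑ q ∈ Finset.univ.filter
        (fun q : Fin (m + 1) × Fin (m + 1) => q.2 = q.1.rev), QQ q = ∑ l, Q l ^ 2 := by
      rw [sum_diag_rev]
      have h1 : ∀ k : Fin (m + 1), QQ (k, k.rev) = (fun l => Q l ^ 2) k.rev := by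
        intro k
        show Q k.rev * Q k.rev = Q k.rev ^ 2
        ring
      rw [Finset.sum_congr rfl fun k _ => h1 k, sum_rev (m + 1) (fun l => Q l ^ 2)]
    have hsum_D : ∑ q ∈ D, QQ q = np2 ^ 2 - ∑ l, Q l ^ 2 := by
      have hsplit := Finset.sum_filter_add_sum_filter_not Finset.univ
        (fun q : Fin (m + 1) × Fin (m + 1) => q.2 = q.1.rev) QQ
      rw [hsum_diag, hsum_univ] at hsplit
      rw [hD]
      linarith
    have hQ2 : Q 0 ^ 2 + Q (Fin.last m) ^ 2 ≤ ∑ l, Q l ^ 2 := by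
      have h0l : (0 : Fin (m + 1)) ≠ Fin.last m := by
        intro h
        have := congrArg Fin.val h
        simp [Fin.val_last] at this
        omega
      have := Finset.sum_le_sum_of_subset_of_nonneg
        (Finset.subset_univ ({0, Fin.last m} : Finset (Fin (m + 1))))
        (fun l _ _ => sq_nonneg (Q l))
      rwa [Finset.sum_pair h0l] at this
    have hsplitD : ∑ q ∈ D, FF q
        = FF q0 + (FF q1 + ∑ q ∈ (D.erase q0).erase q1, FF q) := by
      rw [Finset.add_sum_erase _ FF hq1D', Finset.add_sum_erase _ FF hq0D]
    have hsplitQQ : ∑ q ∈ D, QQ q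
        = QQ q0 + (QQ q1 + ∑ q ∈ (D.erase q0).erase q1, QQ q) := by
      rw [Finset.add_sum_erase _ QQ hq1D', Finset.add_sum_erase _ QQ hq0D]
    have hrest_sum : ∑ q ∈ (D.erase q0).erase q1, FF q
        ≤ (1 / 2) * ∑ q ∈ (D.erase q0).erase q1, QQ q := by
      rw [Finset.mul_sum]
      exact Finset.sum_le_sum hrest
    have hQQq0 : QQ q0 = Q (Fin.last m) * Q 0 := by
      show Q (0 : Fin (m + 1)).rev * Q 0 = _
      rw [hrev0]
    have hQQq1 : QQ q1 = Q 0 * Q (Fin.last m) := by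
      show Q (Fin.last m).rev * Q (Fin.last m) = _
      rw [hrevlast]
    have h2Q : 2 * (Q 0 * Q (Fin.last m)) ≤ Q 0 ^ 2 + Q (Fin.last m) ^ 2 := by
      nlinarith [sq_nonneg (Q 0 - Q (Fin.last m))]
    linarith [hsplitD, hrest_sum, hsplitQQ, hsum_D, hQ2, h2Q, hFFq0, hFFq1, hQQq0, hQQq1]
  have hfin : np2 ^ 2 * Complex.normSq (v m)
      ≤ np2 ^ 2 / 2 * ∑ k ∈ (Finset.range (2 * m + 1)).erase m,
        (Nat.choose (2 * m) k : ℝ) * Complex.normSq (v k) := by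
    have e1 : np2 ^ 2 * Complex.normSq (v m) = (np2 * ‖v m‖) ^ 2 := by
      rw [mul_pow, Complex.sq_norm]
    rw [e1]
    have hfnn : 0 ≤ ∑ q ∈ D, f q ^ 2 := Finset.sum_nonneg fun q _ => sq_nonneg _
    have hgnn : 0 ≤ ∑ q ∈ D, g q ^ 2 := Finset.sum_nonneg fun q _ => sq_nonneg _
    calc (np2 * ‖v m‖) ^ 2 ≤ (∑ q ∈ D, f q ^ 2) * (∑ q ∈ D, g q ^ 2) := hCS
      _ ≤ np2 ^ 2 / 2 * ∑ k ∈ (Finset.range (2 * m + 1)).erase m,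
          (Nat.choose (2 * m) k : ℝ) * Complex.normSq (v k) :=
        mul_le_mul hF hG hgnn (by positivity)
  nlinarith [mul_pos hnp2pos hnp2pos, hfin]


lemma partB (m : ℕ) (hm : 0 < m) :
    InP m (Rlam m ((Nat.choose (2 * m) m : ℝ) + 2)) := by
  intro z a
  rw [_root_.diag, Complex.zero_le_real]
  have hkey := keyineq m hm z a
  have hsplit : ∑ k ∈ Finset.range (2 * m + 1),
      (Nat.choose (2 * m) k : ℝ) * Complex.normSq (vmom m z a k)
      = (Nat.choose (2 * m) m : ℝ) * Complex.normSq (vmom m z a m)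
        + ∑ k ∈ (Finset.range (2 * m + 1)).erase m,
            (Nat.choose (2 * m) k : ℝ) * Complex.normSq (vmom m z a k) :=
    (Finset.add_sum_erase _ _ (by simp [Finset.mem_range]; omega)).symm
  linarith


/-- Theorem 3, parts 5 and 6: if `R_λ ∈ 𝒫_m(ℂ²)` then `λ ≤ binom(2m,m) + 2`;
moreover `R_λ ∈ 𝒫_m(ℂ²)` holds for `λ = binom(2m,m) + 2` while
`R_λ ∉ 𝒫_{m+1}(ℂ²)` for that value (so `𝒫_m(ℂ²) ≠ 𝒫_{m+1}(ℂ²)`); consequently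
the family `S_{λ,m} = {R_λ : λ ∈ ℝ}` has stability index `m + 1`, i.e. `m + 1`
is the least `k` such that `S ∩ 𝒫_k = S ∩ 𝒫_∞`. -/
theorem stmt18 (m : ℕ) (hm : 0 < m) :
    (∀ lam : ℝ, InP m (Rlam m lam) → lam ≤ (Nat.choose (2 * m) m : ℝ) + 2) ∧
      InP m (Rlam m ((Nat.choose (2 * m) m : ℝ) + 2)) ∧
      ¬ InP (m + 1) (Rlam m ((Nat.choose (2 * m) m : ℝ) + 2)) ∧
      IsLeast {k : ℕ | ∀ lam : ℝ,
        InP k (Rlam m lam) ↔ ∀ N : ℕ, 0 < N → InP N (Rlam m lam)} (m + 1) := by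
  refine ⟨fun lam h => partA m hm lam h, partB m hm, ?_, ?_, ?_⟩
  · intro h
    have := partCgen m hm _ h
    linarith
  · intro lam
    constructor
    · intro h N _
      exact allN m lam (partCgen m hm lam h) N
    · intro h
      exact h (m + 1) (by omega)
  · intro k hk
    by_contra hlt
    push_neg at hlt
    have hkm : k ≤ m := by omega
    have h1 : InP k (Rlam m ((Nat.choose (2 * m) m : ℝ) + 2)) :=
      InP_mono ((0 : ℂ), (0 : ℂ)) hkm _ (partB m hm)
    have h2 := (hk ((Nat.choose (2 * m) m : ℝ) + 2)).mp h1 (m + 1) (by omega)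
    have := partCgen m hm _ h2
    linarith
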